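/- For every n ≥ 1, the polynomial P̄ₙ(t₁,t₂) = (1-qt₁)(1-qt₂) Σ_{i=0}^{n-1} q^i(t₁t₂)^i + q^n(1-q)(t₁t₂)^n satisfies the symmetry P̄ₙ(1/(qt₁), 1/(qt₂)) = q^{-n} (t₁t₂)^{-n} P̄ₙ(t₁,t₂). -/

import Mathlib

/-- The field `ℚ(q, t₁, t₂)`. -/
noncomputable abbrev K14 : Type := FractionRing (MvPolynomial (Fin 3) ℚ)

noncomputable def q14 : K14 := algebraMap (MvPolynomial (Fin 3) ℚ) K14 (MvPolynomial.X 0)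
noncomputable def t₁ : K14 := algebraMap (MvPolynomial (Fin 3) ℚ) K14 (MvPolynomial.X 1)
noncomputable def t₂ : K14 := algebraMap (MvPolynomial (Fin 3) ℚ) K14 (MvPolynomial.X 2)

/-- The reduced motivic Poincaré series of the A_{2n-1} singularity:
`P̄ₙ(x,y) = (1-qx)(1-qy)Σ_{i=0}^{n-1} qⁱ(xy)ⁱ + qⁿ(1-q)(xy)ⁿ`. -/
noncomputable def PbarA (n : ℕ) (x y : K14) : K14 :=
  (1 - q14 * x) * (1 - q14 * y) * ∑ i ∈ Finset.range n, q14 ^ i * (x * y) ^ i +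
    q14 ^ n * (1 - q14) * (x * y) ^ n

lemma inj14 : Function.Injective (algebraMap (MvPolynomial (Fin 3) ℚ) K14) :=
  IsFractionRing.injective _ _

lemma hq14 : q14 ≠ 0 := by
  simp only [q14, ne_eq, map_eq_zero_iff _ inj14]
  exact MvPolynomial.X_ne_zero 0

lemma ht₁ : t₁ ≠ 0 := by
  simp only [t₁, ne_eq, map_eq_zero_iff _ inj14]
  exact MvPolynomial.X_ne_zero 1

lemma ht₂ : t₂ ≠ 0 := by
  simp only [t₂, ne_eq, map_eq_zero_iff _ inj14]
  exact MvPolynomial.X_ne_zero 2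

lemma sum_inv_pow (r : K14) (hr : r ≠ 0) (n : ℕ) :
    r ^ n * ∑ i ∈ Finset.range n, (r⁻¹) ^ i = r * ∑ i ∈ Finset.range n, r ^ i := by
  rw [Finset.mul_sum, Finset.mul_sum, ← Finset.sum_range_reflect (fun j => r * r ^ j) n]
  refine Finset.sum_congr rfl fun i hi => ?_
  simp only [Finset.mem_range] at hi
  rw [inv_pow, ← pow_sub₀ r hr hi.le]
  have : n - i = (n - 1 - i) + 1 := by omega
  rw [this, pow_succ]
  ring

set_option maxHeartbeats 1000000 in
/-- Symmetry: `P̄ₙ(1/(qt₁), 1/(qt₂)) = q⁻ⁿ (t₁t₂)⁻ⁿ P̄ₙ(t₁,t₂)` for `n ≥ 1`. -/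
theorem stmt14 (n : ℕ) (hn : 1 ≤ n) :
    PbarA n (1 / (q14 * t₁)) (1 / (q14 * t₂)) =
      q14 ^ (-(n : ℤ)) * (t₁ * t₂) ^ (-(n : ℤ)) * PbarA n t₁ t₂ := by
  have hq := hq14
  have h1 := ht₁
  have h2 := ht₂
  have hr0 : q14 * (t₁ * t₂) ≠ 0 := mul_ne_zero hq (mul_ne_zero h1 h2)
  unfold PbarA
  simp_rw [← mul_pow]
  have hx : q14 * (1 / (q14 * t₁) * (1 / (q14 * t₂))) = (q14 * (t₁ * t₂))⁻¹ := by
    field_simp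
  rw [hx]
  have hs : ∑ i ∈ Finset.range n, ((q14 * (t₁ * t₂))⁻¹) ^ i =
      (q14 * (t₁ * t₂)) * (∑ i ∈ Finset.range n, (q14 * (t₁ * t₂)) ^ i) /
        (q14 * (t₁ * t₂)) ^ n := by
    rw [eq_div_iff (pow_ne_zero n hr0), mul_comm _ ((q14 * (t₁ * t₂)) ^ n),
      sum_inv_pow _ hr0]
  rw [hs, zpow_neg, zpow_natCast, zpow_neg, zpow_natCast]
  have hgs1 : (∑ i ∈ Finset.range n, (q14 * (t₁ * t₂)) ^ i) * (q14 * (t₁ * t₂) - 1) =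
      (q14 * (t₁ * t₂)) ^ n - 1 := geom_sum_mul _ n
  set S := ∑ i ∈ Finset.range n, (q14 * (t₁ * t₂)) ^ i with hS
  field_simp
  have hinv : (q14 * t₁ * t₂) ^ n * q14 ^ n * (1 / (q14 ^ 2 * t₁ * t₂)) ^ n = 1 := by
    rw [← mul_pow, ← mul_pow, mul_one_div,
      (div_eq_one_iff_eq (by simp [hq, h1, h2])).mpr (by ring), one_pow]
  linear_combination ((q14 * (t₁ * t₂)) ^ n * (1 - q14)) * hgs1 +
    (q14 ^ n * (t₁ * t₂) ^ n * (1 - q14)) * hinv
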